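/- Let A be an n × n skew-symmetric complex matrix of rank 2r, let o ∈ ℂⁿ be nonzero, and let P : ℂⁿ → ℂⁿ⁻¹ be a surjective linear map with kernel spanned by o. Then the skew-symmetric matrix P A Pᵀ has rank 2r if o does not belong to the column space of A, and rank 2r − 2 if o belongs to the column space of A. -/

import Mathlib

open Matrix Module

/-- The (non-conjugated) dot-product bilinear form on `Fin n → ℂ`. -/
noncomputable def dotForm (n : ℕ) : LinearMap.BilinForm ℂ (Fin n → ℂ) :=
  LinearMap.mk₂ ℂ (fun x y => x ⬝ᵥ y)
    (fun x y z => add_dotProduct x y z)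
    (fun c x y => smul_dotProduct c x y)
    (fun x y z => dotProduct_add x y z)
    (fun c x y => dotProduct_smul c x y)

lemma dotForm_apply {n : ℕ} (x y : Fin n → ℂ) : dotForm n x y = x ⬝ᵥ y := rfl

lemma dotForm_isRefl (n : ℕ) : (dotForm n).IsRefl := by
  intro x y h
  show y ⬝ᵥ x = 0
  rw [dotProduct_comm]
  exact h

lemma dotForm_nondegenerate (n : ℕ) : (dotForm n).Nondegenerate := by
  refine (dotForm_isRefl n).nondegenerate_iff_separatingLeft.mpr ?_
  intro x hx
  exact dotProduct_eq_zero x hx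

/-- Rank–nullity for the restriction of a linear map to a submodule. -/
lemma finrank_map_add_finrank_inf_ker {V W : Type*} [AddCommGroup V] [Module ℂ V]
    [AddCommGroup W] [Module ℂ W] [FiniteDimensional ℂ V]
    (f : V →ₗ[ℂ] W) (S : Submodule ℂ V) :
    finrank ℂ (S.map f) + finrank ℂ (S ⊓ LinearMap.ker f : Submodule ℂ V) = finrank ℂ S := by
  have h := LinearMap.finrank_range_add_finrank_ker (f.domRestrict S)
  rw [LinearMap.range_domRestrict, LinearMap.ker_domRestrict] at h
  rwa [← Submodule.finrank_map_subtype_eq S ((LinearMap.ker f).comap S.subtype),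
    Submodule.map_comap_subtype] at h

/-- Membership in the orthogonal of a span of a singleton. -/
lemma mem_orthogonal_span_singleton_iff {n : ℕ} (o v : Fin n → ℂ) :
    v ∈ (dotForm n).orthogonal (Submodule.span ℂ {o}) ↔ o ⬝ᵥ v = 0 := by
  constructor
  · intro h
    exact h o (Submodule.mem_span_singleton_self o)
  · intro h m hm
    obtain ⟨c, rfl⟩ := Submodule.mem_span_singleton.mp hm
    show (c • o) ⬝ᵥ v = 0
    rw [smul_dotProduct, h, smul_zero]

/-- Projection of a skew-symmetric matrix: if `A` is `n × n` skew-symmetric of rank `2r`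
and `P : ℂⁿ → ℂⁿ⁻¹` is surjective with kernel spanned by `o ≠ 0`, then `P A Pᵀ` has
rank `2r` if `o` is not in the column space of `A`, and rank `2r - 2` otherwise. -/
theorem rank_projection_skew {n r : ℕ} (A : Matrix (Fin n) (Fin n) ℂ)
    (hA : Aᵀ = -A) (hrank : A.rank = 2 * r)
    (o : Fin n → ℂ) (ho : o ≠ 0)
    (P : Matrix (Fin (n - 1)) (Fin n) ℂ)
    (hPsurj : Function.Surjective P.mulVecLin)
    (hker : LinearMap.ker P.mulVecLin = Submodule.span ℂ {o}) :
    (o ∉ LinearMap.range A.mulVecLin → (P * A * Pᵀ).rank = 2 * r) ∧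
    (o ∈ LinearMap.range A.mulVecLin → (P * A * Pᵀ).rank = 2 * r - 2) := by
  classical
  set fA := A.mulVecLin with hfA
  set fP := P.mulVecLin with hfP
  set fPt := (Pᵀ).mulVecLin with hfPt
  set B := dotForm n with hB
  set H : Submodule ℂ (Fin n → ℂ) := LinearMap.range fPt with hHdef
  set K : Submodule ℂ (Fin n → ℂ) := LinearMap.ker fA with hKdef
  have hnC : finrank ℂ (Fin n → ℂ) = n := by simp
  -- o is in the kernel of P
  have hoker : fP o = 0 := by
    have : o ∈ LinearMap.ker fP := by
      rw [hker]; exact Submodule.mem_span_singleton_self o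
    exact this
  -- finrank of H is n - 1
  have hHle : H ≤ (dotForm n).orthogonal (Submodule.span ℂ {o}) := by
    rintro x ⟨y, rfl⟩
    rw [mem_orthogonal_span_singleton_iff]
    show o ⬝ᵥ (Pᵀ *ᵥ y) = 0
    rw [dotProduct_mulVec, vecMul_transpose]
    have : P *ᵥ o = 0 := hoker
    rw [this, zero_dotProduct]
  have hfinH : finrank ℂ H = n - 1 := by
    have h1 : finrank ℂ H = Pᵀ.rank := rfl
    rw [h1, Matrix.rank_transpose]
    have h2 : P.rank = finrank ℂ (LinearMap.range fP) := rfl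
    rw [h2, LinearMap.range_eq_top.mpr hPsurj]
    simp
  have hHeq : H = (dotForm n).orthogonal (Submodule.span ℂ {o}) := by
    apply Submodule.eq_of_le_of_finrank_le hHle
    rw [LinearMap.BilinForm.finrank_orthogonal (dotForm_nondegenerate n),
      finrank_span_singleton ho, hnC, hfinH]
  -- rank-nullity for A
  have hfinRangeA : finrank ℂ (LinearMap.range fA) = 2 * r := hrank
  have hrn : 2 * r + finrank ℂ K = n := by
    have := LinearMap.finrank_range_add_finrank_ker fA
    rwa [hfinRangeA, hnC] at this
  -- range of A is the orthogonal of its kernel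
  have hrangeA : LinearMap.range fA = (dotForm n).orthogonal K := by
    apply Submodule.eq_of_le_of_finrank_le
    · rintro x ⟨w, rfl⟩ v hv
      show v ⬝ᵥ (A *ᵥ w) = 0
      rw [dotProduct_mulVec, ← mulVec_transpose, hA, neg_mulVec]
      have hv0 : A *ᵥ v = 0 := hv
      rw [hv0, neg_zero, zero_dotProduct]
    · rw [LinearMap.BilinForm.finrank_orthogonal (dotForm_nondegenerate n),
        hnC, hfinRangeA]
      omega
  -- key equivalence
  have hiff : o ∈ LinearMap.range fA ↔ K ≤ H := by
    rw [hrangeA, hHeq]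
    constructor
    · intro hmem v hv
      rw [mem_orthogonal_span_singleton_iff]
      exact dotForm_isRefl n v o (hmem v hv)
    · intro hle v hv
      exact dotForm_isRefl n o v ((mem_orthogonal_span_singleton_iff o v).mp (hle hv))
  -- range of the product
  have hrange : LinearMap.range (P * A * Pᵀ).mulVecLin
      = Submodule.map fP (Submodule.map fA H) := by
    rw [Matrix.mulVecLin_mul, Matrix.mulVecLin_mul, LinearMap.range_comp, Submodule.map_comp]
  have hrankPAPt : (P * A * Pᵀ).rank = finrank ℂ (Submodule.map fP (Submodule.map fA H)) := by
    show finrank ℂ (LinearMap.range (P * A * Pᵀ).mulVecLin) = _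
    rw [hrange]
  -- rank-nullity applied to fA on H and to fP on map fA H
  have hstep1 := finrank_map_add_finrank_inf_ker fA H
  have hstep2 := finrank_map_add_finrank_inf_ker fP (Submodule.map fA H)
  rw [hker] at hstep2
  rw [hfinH, ← hKdef] at hstep1
  constructor
  · -- Case 1 : o ∉ range A
    intro hnot
    have hKnotle : ¬ K ≤ H := fun h => hnot (hiff.mpr h)
    -- finrank (H ⊓ K) = finrank K - 1
    have hsup := Submodule.finrank_sup_add_finrank_inf_eq H K
    have hsuple : finrank ℂ (H ⊔ K : Submodule ℂ (Fin n → ℂ)) ≤ n := by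
      have h3 : finrank ℂ (H ⊔ K : Submodule ℂ (Fin n → ℂ)) ≤ finrank ℂ (Fin n → ℂ) :=
        Submodule.finrank_le _
      omega
    have hinfne : finrank ℂ (H ⊓ K : Submodule ℂ (Fin n → ℂ)) ≠ finrank ℂ K := by
      intro heq
      have hle : H ⊓ K ≤ K := inf_le_right
      have : H ⊓ K = K := Submodule.eq_of_le_of_finrank_le hle (le_of_eq heq.symm)
      exact hKnotle (inf_eq_right.mp this)
    have hinfle : finrank ℂ (H ⊓ K : Submodule ℂ (Fin n → ℂ)) ≤ finrank ℂ K :=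
      Submodule.finrank_mono inf_le_right
    have hlt : finrank ℂ (H ⊓ K : Submodule ℂ (Fin n → ℂ)) < finrank ℂ K :=
      lt_of_le_of_ne hinfle hinfne
    have hinfK : finrank ℂ (H ⊓ K : Submodule ℂ (Fin n → ℂ)) = finrank ℂ K - 1 := by
      rw [hfinH] at hsup; omega
    -- the kernel of P misses map fA H
    have hdisj : Submodule.map fA H ⊓ Submodule.span ℂ {o} = ⊥ := by
      rw [eq_bot_iff]
      rintro x ⟨hx1, hx2⟩
      obtain ⟨c, rfl⟩ := Submodule.mem_span_singleton.mp hx2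
      rcases eq_or_ne c 0 with rfl | hc
      · simp
      · exfalso
        apply hnot
        have : o = c⁻¹ • (c • o) := by rw [smul_smul, inv_mul_cancel₀ hc, one_smul]
        rw [this]
        exact Submodule.smul_mem _ _ (LinearMap.map_le_range hx1)
    rw [hdisj] at hstep2
    rw [hrankPAPt]
    have hbot : finrank ℂ (⊥ : Submodule ℂ (Fin n → ℂ)) = 0 := finrank_bot ℂ _
    rw [hbot] at hstep2
    omega
  · -- Case 2 : o ∈ range A
    intro hmem
    have hKle : K ≤ H := hiff.mp hmem
    have hinfK : H ⊓ K = K := inf_eq_right.mpr hKle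
    rw [hinfK] at hstep1
    -- o ∈ map fA H
    have homem : o ∈ Submodule.map fA H := by
      obtain ⟨w, hw⟩ := hmem
      refine Submodule.mem_map.mpr ⟨w, ?_, hw⟩
      rw [hHeq, mem_orthogonal_span_singleton_iff]
      have h1 : o ⬝ᵥ w = (A *ᵥ w) ⬝ᵥ w := by rw [← hw]; rfl
      have h2 : (A *ᵥ w) ⬝ᵥ w = -((A *ᵥ w) ⬝ᵥ w) := by
        conv_lhs => rw [dotProduct_comm, dotProduct_mulVec, ← mulVec_transpose, hA, neg_mulVec,
          neg_dotProduct]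
      rw [h1]
      linear_combination h2 / 2
    have hspan : Submodule.map fA H ⊓ Submodule.span ℂ {o} = Submodule.span ℂ {o} :=
      inf_eq_right.mpr (Submodule.span_le.mpr (Set.singleton_subset_iff.mpr homem))
    rw [hspan, finrank_span_singleton ho] at hstep2
    -- r ≥ 1
    have hrpos : 1 ≤ 2 * r := by
      rcases Nat.eq_zero_or_pos (2 * r) with h0 | h0
      · exfalso
        have hb : LinearMap.range fA = ⊥ :=
          Submodule.finrank_eq_zero.mp (hfinRangeA.trans h0)
        rw [hb] at hmem
        exact ho ((Submodule.mem_bot ℂ).mp hmem)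
      · exact h0
    rw [hrankPAPt]
    omega
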